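/- Let X be a nonempty set and Ψ a nonempty set of functions g : X → [0,1]. Let η > 1, K ≥ 1, H ≥ 1, points x_h^k ∈ X for k ∈ {1,…,K} and h ∈ {1,…,H}, and functions g^1,…,g^K ∈ Ψ such that for every k ∈ {1,…,K}, ∑_{i=1}^{k−1} ∑_{h=1}^{H} g^k(x_h^i) ≤ η. Suppose d ∈ ℕ is such that the ℓ1-Eluder dimension of Ψ at scale 1/(8ηKH) is at most d. Then there exists a set 𝒦 ⊆ {1,…,K} with |𝒦| ≤ 13·(log₂(4ηKH))²·d such that ∑_{k∉𝒦} ∑_{h=1}^{H} g^k(x_h^k) ≤ d·(2 + 7η·log₂(KH)) + 1. (New Eluder Pigeon Lemma.) -/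

import Mathlib

open Finset

/-- A finite sequence `a : Fin m → X` is `ε`-independent for `Ψ` if for every index `i`
there is `g ∈ Ψ` with `∑_{j<i} |g (a j)| ≤ ε` and `|g (a i)| > ε`. -/
def IsEpsIndep {X : Type*} (Ψ : Set (X → ℝ)) (ε : ℝ) {m : ℕ} (a : Fin m → X) : Prop :=
  ∀ i : Fin m, ∃ g ∈ Ψ, (∑ j ∈ Finset.Iio i, |g (a j)|) ≤ ε ∧ ε < |g (a i)|

/-- The ℓ1-Eluder dimension of `Ψ` at scale `ε₀` is at most `d`: for every `ε ≥ ε₀`,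
every `ε`-independent sequence for `Ψ` has length at most `d`. -/
def EluderDimLE {X : Type*} (Ψ : Set (X → ℝ)) (ε₀ : ℝ) (d : ℕ) : Prop :=
  ∀ ε ≥ ε₀, ∀ m : ℕ, ∀ a : Fin m → X, IsEpsIndep Ψ ε a → m ≤ d



noncomputable def clsF (P : Finset ℕ) (w : ℕ → ℕ → ℝ) (ε : ℝ) (n : ℕ) : ℕ :=
  sInf {c | (∑ j ∈ (P.filter (· < n)).attach,
      if clsF P w ε j.1 = c then w n j.1 else 0) ≤ ε}
decreasing_by exact (Finset.mem_filter.mp j.2).2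

lemma clsF_eq (P : Finset ℕ) (w : ℕ → ℕ → ℝ) (ε : ℝ) (n : ℕ) :
    clsF P w ε n = sInf {c | (∑ j ∈ P.filter (· < n),
      if clsF P w ε j = c then w n j else 0) ≤ ε} := by
  conv_lhs => rw [clsF]
  congr 1
  ext c
  simp only [Set.mem_setOf_eq]
  rw [Finset.sum_attach (P.filter (· < n)) (fun j => if clsF P w ε j = c then w n j else 0)]

lemma sum_orderIso (s : Finset ℕ) (f : ℕ → ℝ) (i : Fin s.card) :
    ∑ j ∈ Finset.Iio i, f ((s.orderIsoOfFin rfl) j : ℕ)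
      = ∑ t ∈ s.filter (· < ((s.orderIsoOfFin rfl) i : ℕ)), f t := by
  set e := s.orderIsoOfFin rfl with he
  have himg : s.filter (· < (e i : ℕ)) = (Finset.Iio i).image (fun j => (e j : ℕ)) := by
    ext t
    simp only [Finset.mem_filter, Finset.mem_image, Finset.mem_Iio]
    constructor
    · rintro ⟨hts, hlt⟩
      refine ⟨e.symm ⟨t, hts⟩, ?_, by simp⟩
      have h1 : (⟨t, hts⟩ : {u // u ∈ s}) < e i := Subtype.coe_lt_coe.mp hlt
      simpa using e.symm.lt_iff_lt.mpr h1
    · rintro ⟨j, hj, rfl⟩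
      exact ⟨(e j).2, Subtype.mk_lt_mk.mp (e.lt_iff_lt.mpr hj)⟩
  rw [himg, Finset.sum_image]
  intro a _ b _ hab
  exact e.injective (Subtype.coe_injective hab)

lemma counting {X : Type*} (Ψ : Set (X → ℝ)) (d : ℕ) (ε₀ ε B : ℝ)
    (hεε₀ : ε₀ ≤ ε) (hε : 0 < ε) (hd : EluderDimLE Ψ ε₀ d)
    (P : Finset ℕ) (pts : ℕ → X) (G : ℕ → X → ℝ)
    (hG : ∀ n, G n ∈ Ψ) (hGpos : ∀ n y, 0 ≤ G n y)
    (h1 : ∀ n ∈ P, ε < G n (pts n))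
    (h2 : ∀ n ∈ P, ∑ j ∈ P.filter (· < n), G n (pts j) ≤ B) :
    P.card ≤ (⌊B / ε⌋₊ + 1) * d := by
  classical
  set N := ⌊B / ε⌋₊ + 1 with hN
  set w : ℕ → ℕ → ℝ := fun n j => G n (pts j) with hw
  set cls : ℕ → ℕ := clsF P w ε with hcls
  have hsumdef : ∀ n c, (∑ j ∈ P.filter (· < n), if cls j = c then w n j else 0)
      = ∑ j ∈ (P.filter (· < n)).filter (fun j => cls j = c), w n j := by
    intro n c; exact (Finset.sum_filter _ _).symm
  -- claim 1 : for n ∈ P there is c < N in the defining set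
  have claim1 : ∀ n ∈ P, ∃ c < N,
      (∑ j ∈ P.filter (· < n), if cls j = c then w n j else 0) ≤ ε := by
    intro n hn
    by_contra hcon
    push_neg at hcon
    have hbig : ∀ c ∈ Finset.range N,
        ε < ∑ j ∈ P.filter (· < n), if cls j = c then w n j else 0 := by
      intro c hc
      exact lt_of_not_ge (fun hle => absurd hle (by simpa using hcon c (Finset.mem_range.mp hc)))
    have htot : (N : ℝ) * ε < ∑ c ∈ Finset.range N,
        ∑ j ∈ P.filter (· < n), if cls j = c then w n j else 0 := by
      calc (N : ℝ) * ε = ∑ _c ∈ Finset.range N, ε := by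
            rw [Finset.sum_const, Finset.card_range, nsmul_eq_mul]
        _ < _ := Finset.sum_lt_sum_of_nonempty (by simp [hN]) hbig
    have hle : ∑ c ∈ Finset.range N,
        (∑ j ∈ P.filter (· < n), if cls j = c then w n j else 0)
        ≤ ∑ j ∈ P.filter (· < n), w n j := by
      rw [Finset.sum_comm]
      apply Finset.sum_le_sum
      intro j _
      rw [Finset.sum_ite_eq (Finset.range N) (cls j) (fun _ => w n j)]
      split
      · exact le_rfl
      · exact hGpos n _
    have hB : ∑ j ∈ P.filter (· < n), w n j ≤ B := h2 n hn
    have : (N : ℝ) * ε < B := lt_of_lt_of_le htot (le_trans hle hB)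
    have hNB : B < (N : ℝ) * ε := by
      have := Nat.lt_floor_add_one (B / ε)
      have h2' : B / ε < (N : ℝ) := by exact_mod_cast this
      calc B = B / ε * ε := by field_simp
        _ < (N : ℝ) * ε := by exact mul_lt_mul_of_pos_right h2' hε
    linarith
  -- consequences
  have hclsN : ∀ n ∈ P, cls n < N ∧
      (∑ j ∈ P.filter (· < n), if cls j = cls n then w n j else 0) ≤ ε := by
    intro n hn
    obtain ⟨c, hcN, hcle⟩ := claim1 n hn
    have hnonempty : {c | (∑ j ∈ P.filter (· < n), if cls j = c then w n j else 0) ≤ ε}.Nonempty :=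
      ⟨c, hcle⟩
    have hmem := Nat.sInf_mem hnonempty
    have hle : sInf {c | (∑ j ∈ P.filter (· < n), if cls j = c then w n j else 0) ≤ ε} ≤ c :=
      Nat.sInf_le hcle
    have heq : cls n = sInf {c | (∑ j ∈ P.filter (· < n), if cls j = c then w n j else 0) ≤ ε} := by
      rw [hcls, clsF_eq]
    constructor
    · rw [heq]; exact lt_of_le_of_lt hle hcN
    · rw [heq]; exact hmem
  -- fibers are independent sequences
  have hfiber : ∀ c, (P.filter (fun n => cls n = c)).card ≤ d := by
    intro c
    set s := P.filter (fun n => cls n = c) with hs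
    set e := s.orderIsoOfFin rfl with he
    set a : Fin s.card → X := fun j => pts (e j) with ha
    apply hd ε hεε₀ s.card a
    intro i
    have hmem : ((e i : ℕ)) ∈ s := (e i).2
    have hmemP : ((e i : ℕ)) ∈ P := (Finset.mem_filter.mp hmem).1
    have hclsei : cls (e i : ℕ) = c := (Finset.mem_filter.mp hmem).2
    refine ⟨G (e i : ℕ), hG _, ?_, ?_⟩
    · have habs : ∀ j : Fin s.card, |G (e i : ℕ) (a j)| = G (e i : ℕ) (pts (e j : ℕ)) := by
        intro j; rw [ha]; exact abs_of_nonneg (hGpos _ _)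
      calc ∑ j ∈ Finset.Iio i, |G (e i : ℕ) (a j)|
          = ∑ j ∈ Finset.Iio i, G (e i : ℕ) (pts ((e j : ℕ))) := by
            apply Finset.sum_congr rfl; intro j _; exact habs j
        _ = ∑ t ∈ s.filter (· < (e i : ℕ)), G (e i : ℕ) (pts t) :=
            sum_orderIso s (fun t => G (e i : ℕ) (pts t)) i
        _ = ∑ j ∈ P.filter (· < (e i : ℕ)), if cls j = c then w (e i : ℕ) j else 0 := by
            rw [hsumdef]
            congr 1
            ext t
            simp only [hs, Finset.mem_filter]
            tauto
        _ ≤ ε := by rw [← hclsei]; exact (hclsN _ hmemP).2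
    · have : ε < G (e i : ℕ) (pts (e i : ℕ)) := h1 _ hmemP
      rw [ha]
      calc ε < G (e i : ℕ) (pts (e i : ℕ)) := this
        _ ≤ |G (e i : ℕ) (pts ((e i : ℕ)))| := le_abs_self _
  -- put together
  calc P.card = ∑ c ∈ Finset.range N, (P.filter (fun n => cls n = c)).card := by
        apply Finset.card_eq_sum_card_fiberwise
        intro n hn
        exact Finset.mem_range.mpr (hclsN n hn).1
    _ ≤ ∑ _c ∈ Finset.range N, d := Finset.sum_le_sum (fun c _ => hfiber c)
    _ = N * d := by rw [Finset.sum_const, Finset.card_range, smul_eq_mul]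


def kdxF (K H : ℕ) (hK : 0 < K) (n : ℕ) : Fin K :=
  if h : n / H < K then ⟨n / H, h⟩ else ⟨0, hK⟩

def hdxF (H : ℕ) (hH : 0 < H) (n : ℕ) : Fin H := ⟨n % H, Nat.mod_lt n hH⟩

lemma kdxF_val (K H : ℕ) (hK : 0 < K) (hH : 0 < H) (n : ℕ) (hn : n < K * H) :
    (kdxF K H hK n).1 = n / H := by
  have h : n / H < K := (Nat.div_lt_iff_lt_mul hH).mpr hn
  simp [kdxF, h]

lemma encode_lt (K H : ℕ) (p : Fin K × Fin H) : p.1.1 * H + p.2.1 < K * H := by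
  calc p.1.1 * H + p.2.1 < p.1.1 * H + H := by exact Nat.add_lt_add_left p.2.2 _
    _ = (p.1.1 + 1) * H := by ring
    _ ≤ K * H := Nat.mul_le_mul_right H p.1.2

lemma decode_encode (K H : ℕ) (hK : 0 < K) (hH : 0 < H) (p : Fin K × Fin H) :
    kdxF K H hK (p.1.1 * H + p.2.1) = p.1 ∧ hdxF H hH (p.1.1 * H + p.2.1) = p.2 := by
  have hdiv : (p.1.1 * H + p.2.1) / H = p.1.1 := by
    rw [mul_comm p.1.1 H, Nat.mul_add_div hH, Nat.div_eq_of_lt p.2.2, add_zero]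
  have hmod : (p.1.1 * H + p.2.1) % H = p.2.1 := by
    rw [mul_comm p.1.1 H, Nat.mul_add_mod, Nat.mod_eq_of_lt p.2.2]
  constructor
  · apply Fin.ext
    rw [kdxF_val K H hK hH _ (encode_lt K H p), hdiv]
  · apply Fin.ext
    show (p.1.1 * H + p.2.1) % H = p.2.1
    exact hmod

lemma sum_decode (K H : ℕ) (hK : 0 < K) (hH : 0 < H) (f : Fin K → Fin H → ℝ) :
    ∑ n ∈ Finset.range (K * H), f (kdxF K H hK n) (hdxF H hH n) = ∑ k, ∑ h, f k h := by
  have hp : (∑ k, ∑ h, f k h) = ∑ p ∈ (Finset.univ : Finset (Fin K × Fin H)), f p.1 p.2 :=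
    (Fintype.sum_prod_type (f := fun p : Fin K × Fin H => f p.1 p.2)).symm
  rw [hp]
  apply Finset.sum_nbij' (i := fun n => (kdxF K H hK n, hdxF H hH n))
    (j := fun p : Fin K × Fin H => p.1.1 * H + p.2.1)
  · intro a _; exact Finset.mem_univ _
  · intro p _; exact Finset.mem_range.mpr (encode_lt K H p)
  · intro n hn
    show (kdxF K H hK n).1 * H + (hdxF H hH n).1 = n
    rw [kdxF_val K H hK hH n (Finset.mem_range.mp hn)]
    show n / H * H + n % H = n
    rw [mul_comm, Nat.div_add_mod]
  · intro p _
    have h := decode_encode K H hK hH p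
    show (kdxF K H hK (p.1.1 * H + p.2.1), hdxF H hH (p.1.1 * H + p.2.1)) = p
    rw [h.1, h.2]
  · intro n _; rfl

section Main0
variable {X : Type*}
    (Ψ : Set (X → ℝ)) (η : ℝ) (K H : ℕ) (hK0 : 0 < K) (hH0 : 0 < H)
    (x : Fin K → Fin H → X)
    (g : Fin K → X → ℝ)

-- `lemA` : mass of g k on all points of earlier episodes is at most η
lemma lemA (hsum : ∀ k : Fin K, ∑ i ∈ Finset.Iio k, ∑ h, g k (x i h) ≤ η) (k : Fin K) :
    ∑ j ∈ Finset.range (k.1 * H), g k (x (kdxF K H hK0 j) (hdxF H hH0 j)) ≤ η := by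
  classical
  have hdec := sum_decode K H hK0 hH0 (fun i h => if i < k then g k (x i h) else 0)
  have hrhs : (∑ i, ∑ h, if i < k then g k (x i h) else 0)
      = ∑ i ∈ Finset.Iio k, ∑ h, g k (x i h) := by
    have h1 : (∑ i, ∑ h, if i < k then g k (x i h) else 0)
        = ∑ i, if i < k then (∑ h, g k (x i h)) else 0 := by
      apply Finset.sum_congr rfl
      intro i _
      split <;> simp
    rw [h1, Finset.sum_ite, Finset.sum_const_zero, add_zero]
    apply Finset.sum_congr
    · ext i; simp [Finset.mem_Iio]
    · intros; rfl
  have hlhs : (∑ n ∈ Finset.range (K * H),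
        if kdxF K H hK0 n < k then g k (x (kdxF K H hK0 n) (hdxF H hH0 n)) else 0)
      = ∑ j ∈ Finset.range (k.1 * H), g k (x (kdxF K H hK0 j) (hdxF H hH0 j)) := by
    rw [← Finset.sum_filter]
    apply Finset.sum_congr _ (fun _ _ => rfl)
    ext n
    simp only [Finset.mem_filter, Finset.mem_range]
    constructor
    · rintro ⟨hn, hlt⟩
      have hv : (kdxF K H hK0 n).1 = n / H := kdxF_val K H hK0 hH0 n hn
      have : n / H < k.1 := by rw [← hv]; exact hlt
      exact (Nat.div_lt_iff_lt_mul hH0).mp this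
    · intro hn
      have hnKH : n < K * H := lt_of_lt_of_le hn (Nat.mul_le_mul_right H (le_of_lt k.2))
      refine ⟨hnKH, ?_⟩
      have hv : (kdxF K H hK0 n).1 = n / H := kdxF_val K H hK0 hH0 n hnKH
      have hdl : n / H < k.1 := (Nat.div_lt_iff_lt_mul hH0).mpr hn
      exact Fin.lt_def.mpr (by rw [hv]; exact hdl)
  calc ∑ j ∈ Finset.range (k.1 * H), g k (x (kdxF K H hK0 j) (hdxF H hH0 j))
      = ∑ i ∈ Finset.Iio k, ∑ h, g k (x i h) := by rw [← hlhs, hdec, hrhs]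
    _ ≤ η := hsum k


lemma app (hΨbdd : ∀ g ∈ Ψ, ∀ x, 0 ≤ g x ∧ g x ≤ 1) (hη : 1 < η)
    (hg : ∀ k, g k ∈ Ψ)
    (hsum : ∀ k : Fin K, ∑ i ∈ Finset.Iio k, ∑ h, g k (x i h) ≤ η)
    (d : ℕ) (hd : EluderDimLE Ψ (1 / (8 * η * K * H)) d)
    (l : ℕ) (hl : (2:ℝ)^(l+1) ≤ 8 * η * K * H)
    (P : Finset ℕ) (hPr : P ⊆ Finset.range (K * H))
    (hPb : ∀ n ∈ P, ((2:ℝ)^(l+1))⁻¹ < g (kdxF K H hK0 n) (x (kdxF K H hK0 n) (hdxF H hH0 n))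
        ∧ g (kdxF K H hK0 n) (x (kdxF K H hK0 n) (hdxF H hH0 n)) ≤ ((2:ℝ)^l)⁻¹)
    (hPo : ∀ n ∈ P, ((P.filter (fun j => j < n ∧ kdxF K H hK0 j = kdxF K H hK0 n)).card : ℝ)
        ≤ η * 2^l / 2) :
    (P.card : ℝ) ≤ (3 * η * 2^l + 1) * d := by
  classical
  have hη0 : (0:ℝ) < η := by linarith
  set ε : ℝ := ((2:ℝ)^(l+1))⁻¹ with hε
  have hεpos : 0 < ε := by positivity
  have hgn : ∀ kk yy, 0 ≤ g kk yy := fun kk yy => (hΨbdd _ (hg kk) yy).1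
  have hεε₀ : 1 / (8 * η * K * H) ≤ ε := by
    rw [hε, ← one_div]
    apply one_div_le_one_div_of_le
    · positivity
    · exact hl
  have h2 : ∀ n ∈ P, ∑ j ∈ P.filter (· < n),
      g (kdxF K H hK0 n) (x (kdxF K H hK0 j) (hdxF H hH0 j)) ≤ 3/2 * η := by
    intro n hn
    set k₀ := kdxF K H hK0 n with hk₀
    have hkmono : ∀ j ∈ P, j < n → kdxF K H hK0 j ≤ k₀ := by
      intro j hj hjn
      have hjr := Finset.mem_range.mp (hPr hj)
      have hnr := Finset.mem_range.mp (hPr hn)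
      have h1 : (kdxF K H hK0 j).1 = j / H := kdxF_val K H hK0 hH0 j hjr
      have h2 : (k₀).1 = n / H := kdxF_val K H hK0 hH0 n hnr
      apply Fin.le_def.mpr
      rw [h1, h2]
      exact Nat.div_le_div_right (le_of_lt hjn)
    have hsplit : P.filter (· < n) =
        (P.filter (fun j => j < n ∧ kdxF K H hK0 j < k₀))
          ∪ (P.filter (fun j => j < n ∧ kdxF K H hK0 j = k₀)) := by
      ext j
      simp only [Finset.mem_filter, Finset.mem_union]
      constructor
      · rintro ⟨hj, hjn⟩
        rcases lt_or_eq_of_le (hkmono j hj hjn) with hlt | heq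
        · exact Or.inl ⟨hj, hjn, hlt⟩
        · exact Or.inr ⟨hj, hjn, heq⟩
      · rintro (⟨hj, hjn, _⟩ | ⟨hj, hjn, _⟩) <;> exact ⟨hj, hjn⟩
    have hdisj : Disjoint (P.filter (fun j => j < n ∧ kdxF K H hK0 j < k₀))
        (P.filter (fun j => j < n ∧ kdxF K H hK0 j = k₀)) := by
      rw [Finset.disjoint_left]
      intro j hj1 hj2
      have h1 := (Finset.mem_filter.mp hj1).2.2
      have h2 := (Finset.mem_filter.mp hj2).2.2
      rw [h2] at h1
      exact lt_irrefl _ h1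
    rw [hsplit, Finset.sum_union hdisj]
    have hpiece1 : ∑ j ∈ P.filter (fun j => j < n ∧ kdxF K H hK0 j < k₀),
        g k₀ (x (kdxF K H hK0 j) (hdxF H hH0 j)) ≤ η := by
      have hsub : P.filter (fun j => j < n ∧ kdxF K H hK0 j < k₀) ⊆
          Finset.range (k₀.1 * H) := by
        intro j hj
        obtain ⟨hjP, _, hjlt⟩ := Finset.mem_filter.mp hj
        have hjr := Finset.mem_range.mp (hPr hjP)
        have h1 : (kdxF K H hK0 j).1 = j / H := kdxF_val K H hK0 hH0 j hjr
        have : j / H < k₀.1 := by rw [← h1]; exact Fin.lt_def.mp hjlt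
        exact Finset.mem_range.mpr ((Nat.div_lt_iff_lt_mul hH0).mp this)
      calc ∑ j ∈ P.filter (fun j => j < n ∧ kdxF K H hK0 j < k₀),
            g k₀ (x (kdxF K H hK0 j) (hdxF H hH0 j))
          ≤ ∑ j ∈ Finset.range (k₀.1 * H), g k₀ (x (kdxF K H hK0 j) (hdxF H hH0 j)) :=
            Finset.sum_le_sum_of_subset_of_nonneg hsub (fun j _ _ => hgn _ _)
        _ ≤ η := lemA η K H hK0 hH0 x g hsum k₀
    have hpiece2 : ∑ j ∈ P.filter (fun j => j < n ∧ kdxF K H hK0 j = k₀),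
        g k₀ (x (kdxF K H hK0 j) (hdxF H hH0 j)) ≤ η / 2 := by
      have hterm : ∀ j ∈ P.filter (fun j => j < n ∧ kdxF K H hK0 j = k₀),
          g k₀ (x (kdxF K H hK0 j) (hdxF H hH0 j)) ≤ ((2:ℝ)^l)⁻¹ := by
        intro j hj
        obtain ⟨hjP, _, hjeq⟩ := Finset.mem_filter.mp hj
        rw [← hjeq]
        exact (hPb j hjP).2
      calc ∑ j ∈ P.filter (fun j => j < n ∧ kdxF K H hK0 j = k₀),
            g k₀ (x (kdxF K H hK0 j) (hdxF H hH0 j))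
          ≤ (P.filter (fun j => j < n ∧ kdxF K H hK0 j = k₀)).card • ((2:ℝ)^l)⁻¹ :=
            Finset.sum_le_card_nsmul _ _ _ hterm
        _ = ((P.filter (fun j => j < n ∧ kdxF K H hK0 j = k₀)).card : ℝ) * ((2:ℝ)^l)⁻¹ := by
            rw [nsmul_eq_mul]
        _ ≤ (η * 2^l / 2) * ((2:ℝ)^l)⁻¹ := by
            apply mul_le_mul_of_nonneg_right (hPo n hn) (by positivity)
        _ = η / 2 := by
            field_simp
    linarith
  have hcount := counting Ψ d (1 / (8 * η * K * H)) ε (3/2 * η) hεε₀ hεpos hd P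
    (fun n => x (kdxF K H hK0 n) (hdxF H hH0 n)) (fun n => g (kdxF K H hK0 n))
    (fun n => hg _) (fun n y => hgn _ _)
    (fun n hn => (hPb n hn).1) h2
  have hfrac : (3/2 * η) / ε = 3 * η * 2^l := by
    rw [hε, div_eq_mul_inv, inv_inv]
    ring_nf
  calc (P.card : ℝ) ≤ ((⌊(3/2 * η) / ε⌋₊ + 1) * d : ℕ) := by exact_mod_cast hcount
    _ = ((⌊(3/2 * η) / ε⌋₊ : ℝ) + 1) * d := by push_cast; ring
    _ ≤ ((3/2 * η) / ε + 1) * d := by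
        apply mul_le_mul_of_nonneg_right _ (by positivity)
        have : (⌊(3/2 * η) / ε⌋₊ : ℝ) ≤ (3/2 * η) / ε := Nat.floor_le (by positivity)
        linarith
    _ = (3 * η * 2^l + 1) * d := by rw [hfrac]


end Main0

set_option maxHeartbeats 2000000 in
/-- New Eluder Pigeon Lemma. -/
theorem eluder_pigeon {X : Type*} [Nonempty X]
    (Ψ : Set (X → ℝ)) (hΨne : Ψ.Nonempty) (hΨbdd : ∀ g ∈ Ψ, ∀ x, 0 ≤ g x ∧ g x ≤ 1)
    (η : ℝ) (hη : 1 < η) (K H : ℕ) (hK : 1 ≤ K) (hH : 1 ≤ H)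
    (x : Fin K → Fin H → X)
    (g : Fin K → X → ℝ) (hg : ∀ k, g k ∈ Ψ)
    (hsum : ∀ k : Fin K, ∑ i ∈ Finset.Iio k, ∑ h, g k (x i h) ≤ η)
    (d : ℕ) (hd : EluderDimLE Ψ (1 / (8 * η * K * H)) d) :
    ∃ 𝒦 : Finset (Fin K),
      (𝒦.card : ℝ) ≤ 13 * (Real.logb 2 (4 * η * K * H)) ^ 2 * d ∧
      ∑ k ∈ 𝒦ᶜ, ∑ h, g k (x k h) ≤ d * (2 + 7 * η * Real.logb 2 (K * H)) + 1 := by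
  classical
  have hK0 : 0 < K := hK
  have hH0 : 0 < H := hH
  have hη0 : (0:ℝ) < η := by linarith
  have hgn : ∀ kk yy, 0 ≤ g kk yy := fun kk yy => (hΨbdd _ (hg kk) yy).1
  have hg1 : ∀ kk yy, g kk yy ≤ 1 := fun kk yy => (hΨbdd _ (hg kk) yy).2
  set val : ℕ → ℝ := fun n => g (kdxF K H hK0 n) (x (kdxF K H hK0 n) (hdxF H hH0 n)) with hvaldef
  set l₀ := Nat.clog 2 (K * H) with hl₀def
  set c₀ : ℕ → ℕ := fun l => ⌊η * 2^l / 2⌋₊ with hc₀def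
  set Sset : ℕ → Fin K → Finset ℕ := fun l k => (Finset.range (K * H)).filter
      (fun n => (((2:ℝ)^(l+1))⁻¹ < val n ∧ val n ≤ ((2:ℝ)^l)⁻¹) ∧ kdxF K H hK0 n = k) with hSdef
  set badset : ℕ → Finset (Fin K) := fun l =>
      Finset.univ.filter (fun k => c₀ l + 1 ≤ (Sset l k).card) with hbaddef
  set 𝒦 : Finset (Fin K) := (Finset.range l₀).biUnion badset with h𝒦def
  have hKH1 : 1 ≤ K * H := Nat.mul_pos hK0 hH0
  have hKHr : (1:ℝ) ≤ ((K * H : ℕ) : ℝ) := by exact_mod_cast hKH1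
  have hKHr' : (0:ℝ) < (K : ℝ) * (H : ℝ) := by
    have : (0:ℝ) < ((K * H : ℕ) : ℝ) := by linarith
    push_cast at this; linarith
  have hc₀le : ∀ l : ℕ, (c₀ l : ℝ) ≤ η * 2^l / 2 := by
    intro l
    exact Nat.floor_le (by positivity)
  have hc₀lt : ∀ l : ℕ, η * 2^l / 2 < (c₀ l : ℝ) + 1 := by
    intro l
    exact Nat.lt_floor_add_one _
  -- scales below l₀ are admissible
  have hKH2 : 1 ≤ l₀ → 1 < K * H := by
    intro h1
    by_contra hcon
    push_neg at hcon
    interval_cases h : K * H <;> simp_all [hl₀def]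
  have hscale : ∀ l, l < l₀ → (2:ℝ)^(l+1) ≤ 8 * η * K * H := by
    intro l hll
    have h1lt : 1 < K * H := hKH2 (by omega)
    have h2p : 2^(l₀ - 1) < K * H := Nat.pow_pred_clog_lt_self (by norm_num) h1lt
    have hnat : 2^l₀ ≤ 2 * (K * H) := by
      have he : l₀ - 1 + 1 = l₀ := by omega
      have h2 : 2^(l₀ - 1 + 1) = 2 * 2^(l₀ - 1) := by rw [pow_succ]; ring
      rw [he] at h2
      omega
    have hr1 : (2:ℝ)^(l+1) ≤ (2:ℝ)^l₀ :=
      pow_le_pow_right₀ (by norm_num) (by omega)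
    have hr2 : ((2:ℝ))^l₀ ≤ 2 * ((K * H : ℕ) : ℝ) := by
      calc ((2:ℝ))^l₀ = ((2^l₀ : ℕ) : ℝ) := by push_cast; ring
        _ ≤ ((2 * (K * H) : ℕ) : ℝ) := by exact_mod_cast hnat
        _ = 2 * ((K * H : ℕ) : ℝ) := by push_cast; ring
    have hr3 : 2 * ((K * H : ℕ) : ℝ) ≤ 8 * η * K * H := by
      push_cast
      nlinarith
    linarith
  -- the per-scale point count bound for good episodes
  set Pgood : ℕ → Finset ℕ := fun l => (Finset.range (K * H)).filter
      (fun n => (((2:ℝ)^(l+1))⁻¹ < val n ∧ val n ≤ ((2:ℝ)^l)⁻¹)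
        ∧ kdxF K H hK0 n ∉ badset l) with hPgooddef
  have hgood : ∀ l, l < l₀ → (((Pgood l).card : ℝ)) ≤ (3 * η * 2^l + 1) * d := by
    intro l hll
    apply app Ψ η K H hK0 hH0 x g hΨbdd hη hg hsum d hd l (hscale l hll)
    · exact Finset.filter_subset _ _
    · intro n hn
      exact (Finset.mem_filter.mp hn).2.1
    · intro n hn
      obtain ⟨hnr, hnb, hnbad⟩ := Finset.mem_filter.mp hn
      have hsub : (Pgood l).filter (fun j => j < n ∧ kdxF K H hK0 j = kdxF K H hK0 n)
          ⊆ Sset l (kdxF K H hK0 n) := by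
        intro j hj
        obtain ⟨hjP, hjn, hjeq⟩ := Finset.mem_filter.mp hj
        obtain ⟨hjr, hjb, _⟩ := Finset.mem_filter.mp hjP
        exact Finset.mem_filter.mpr ⟨hjr, hjb, hjeq⟩
      have hcard1 := Finset.card_le_card hsub
      have hnotbad : ¬ (c₀ l + 1 ≤ (Sset l (kdxF K H hK0 n)).card) := by
        intro hcon
        exact hnbad (Finset.mem_filter.mpr ⟨Finset.mem_univ _, hcon⟩)
      have hcard2 : ((Pgood l).filter
          (fun j => j < n ∧ kdxF K H hK0 j = kdxF K H hK0 n)).card ≤ c₀ l := by omega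
      calc (((Pgood l).filter (fun j => j < n ∧ kdxF K H hK0 j = kdxF K H hK0 n)).card : ℝ)
          ≤ (c₀ l : ℝ) := by exact_mod_cast hcard2
        _ ≤ η * 2^l / 2 := hc₀le l
  -- the bad episode count bound
  have hbadcard : ∀ l, l < l₀ → ((badset l).card : ℝ) ≤ 8 * d := by
    intro l hll
    have hpick : ∀ k : Fin K, ∃ t : Finset ℕ,
        (c₀ l + 1 ≤ (Sset l k).card → t ⊆ Sset l k ∧ t.card = c₀ l + 1) := by
      intro k
      by_cases hc : c₀ l + 1 ≤ (Sset l k).card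
      · obtain ⟨t, ht1, ht2⟩ := Finset.exists_subset_card_eq hc
        exact ⟨t, fun _ => ⟨ht1, ht2⟩⟩
      · exact ⟨∅, fun hcon => absurd hcon hc⟩
    choose pick hpickspec using hpick
    have hpicksub : ∀ k ∈ badset l, pick k ⊆ Sset l k := fun k hk =>
      (hpickspec k (Finset.mem_filter.mp hk).2).1
    have hpickcard : ∀ k ∈ badset l, (pick k).card = c₀ l + 1 := fun k hk =>
      (hpickspec k (Finset.mem_filter.mp hk).2).2
    set P := (badset l).biUnion pick with hPdef
    have hdisj : ∀ k1 ∈ (badset l : Finset (Fin K)), ∀ k2 ∈ badset l, k1 ≠ k2 →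
        Disjoint (pick k1) (pick k2) := by
      intro k1 hk1 k2 hk2 hne
      rw [Finset.disjoint_left]
      intro n hn1 hn2
      have e1 := (Finset.mem_filter.mp (hpicksub k1 hk1 hn1)).2.2
      have e2 := (Finset.mem_filter.mp (hpicksub k2 hk2 hn2)).2.2
      exact hne (by rw [← e1, ← e2])
    have hPcard : P.card = (badset l).card * (c₀ l + 1) := by
      rw [hPdef, Finset.card_biUnion hdisj, Finset.sum_congr rfl hpickcard,
        Finset.sum_const, smul_eq_mul]
    have happlied : (P.card : ℝ) ≤ (3 * η * 2^l + 1) * d := by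
      apply app Ψ η K H hK0 hH0 x g hΨbdd hη hg hsum d hd l (hscale l hll)
      · intro n hn
        obtain ⟨k, hk, hnk⟩ := Finset.mem_biUnion.mp hn
        exact Finset.mem_range.mpr (Finset.mem_range.mp
          (Finset.mem_filter.mp (hpicksub k hk hnk)).1)
      · intro n hn
        obtain ⟨k, hk, hnk⟩ := Finset.mem_biUnion.mp hn
        exact (Finset.mem_filter.mp (hpicksub k hk hnk)).2.1
      · intro n hn
        obtain ⟨k0, hk0, hnk0⟩ := Finset.mem_biUnion.mp hn
        have hkdxn : kdxF K H hK0 n = k0 :=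
          (Finset.mem_filter.mp (hpicksub k0 hk0 hnk0)).2.2
        have hsub : P.filter (fun j => j < n ∧ kdxF K H hK0 j = kdxF K H hK0 n)
            ⊆ (pick k0).erase n := by
          intro j hj
          obtain ⟨hjP, hjn, hjeq⟩ := Finset.mem_filter.mp hj
          obtain ⟨k', hk', hjk'⟩ := Finset.mem_biUnion.mp hjP
          have hjk : kdxF K H hK0 j = k' :=
            (Finset.mem_filter.mp (hpicksub k' hk' hjk')).2.2
          have hk'k0 : k' = k0 := by rw [← hjk, hjeq, hkdxn]
          refine Finset.mem_erase.mpr ⟨by omega, by rw [← hk'k0]; exact hjk'⟩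
        have hcard1 := Finset.card_le_card hsub
        have hcard2 : ((pick k0).erase n).card = c₀ l := by
          rw [Finset.card_erase_of_mem hnk0, hpickcard k0 hk0]
          omega
        calc ((P.filter (fun j => j < n ∧ kdxF K H hK0 j = kdxF K H hK0 n)).card : ℝ)
            ≤ (c₀ l : ℝ) := by rw [← hcard2]; exact_mod_cast hcard1
          _ ≤ η * 2^l / 2 := hc₀le l
    have hb1 : ((badset l).card : ℝ) * ((c₀ l : ℝ) + 1) ≤ (3 * η * 2^l + 1) * d := by
      rw [hPcard] at happlied
      push_cast at happlied
      linarith [happlied]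
    have h2l : (1:ℝ) ≤ (2:ℝ)^l := one_le_pow₀ (by norm_num)
    have hA1 : (1:ℝ) ≤ η * 2^l := by nlinarith
    have hbc0 : (0:ℝ) ≤ ((badset l).card : ℝ) := Nat.cast_nonneg _
    have hd0 : (0:ℝ) ≤ (d : ℝ) := Nat.cast_nonneg _
    have hint1 : ((badset l).card : ℝ) * (η * 2^l / 2)
        ≤ ((badset l).card : ℝ) * ((c₀ l : ℝ) + 1) :=
      mul_le_mul_of_nonneg_left (le_of_lt (hc₀lt l)) hbc0
    have hAd : (0:ℝ) ≤ (η * 2^l - 1) * d := mul_nonneg (by linarith) hd0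
    have h4 : ((badset l).card : ℝ) * (η * 2^l) ≤ 8 * d * (η * 2^l) := by nlinarith
    have hA0 : (0:ℝ) < η * 2^l := by linarith
    exact le_of_mul_le_mul_right h4 hA0
  have hd0 : (0:ℝ) ≤ (d : ℝ) := Nat.cast_nonneg _
  have hlb2 : Real.logb 2 (2:ℝ) = 1 := by
    simp
  have hlogpow : ∀ m : ℕ, Real.logb 2 ((2:ℝ)^m) = m := by
    intro m
    rw [Real.logb_pow, hlb2, mul_one]
  have hlogKH1 : 1 ≤ l₀ → (1:ℝ) ≤ Real.logb 2 ((K * H : ℕ) : ℝ) := by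
    intro h1
    have h1lt : 1 < K * H := hKH2 h1
    have hKH2r : (2:ℝ) ≤ ((K * H : ℕ) : ℝ) := by exact_mod_cast h1lt
    have := Real.logb_le_logb_of_le (by norm_num : (1:ℝ) < 2) (by norm_num : (0:ℝ) < 2) hKH2r
    rw [hlb2] at this
    exact this
  have hlogKHle : 1 ≤ l₀ → (l₀ : ℝ) ≤ Real.logb 2 ((K * H : ℕ) : ℝ) + 1 := by
    intro h1
    have h1lt : 1 < K * H := hKH2 h1
    have h2p : 2^(l₀ - 1) < K * H := Nat.pow_pred_clog_lt_self (by norm_num) h1lt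
    have h2pr : ((2:ℝ))^(l₀ - 1) < ((K * H : ℕ) : ℝ) := by
      calc ((2:ℝ))^(l₀ - 1) = ((2^(l₀ - 1) : ℕ) : ℝ) := by push_cast; ring
        _ < ((K * H : ℕ) : ℝ) := by exact_mod_cast h2p
    have hlt := Real.logb_lt_logb (by norm_num : (1:ℝ) < 2) (by positivity) h2pr
    rw [hlogpow (l₀ - 1)] at hlt
    have hc : ((l₀ - 1 : ℕ) : ℝ) = (l₀ : ℝ) - 1 := by
      rw [Nat.cast_sub h1]; norm_num
    rw [hc] at hlt
    linarith
  have hcastKH : ((K * H : ℕ) : ℝ) = (K : ℝ) * (H : ℝ) := by push_cast; ring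
  refine ⟨𝒦, ?_, ?_⟩
  · -- cardinality bound
    have hcard2 : (𝒦.card : ℝ) ≤ 8 * l₀ * d := by
      calc (𝒦.card : ℝ) ≤ ((∑ l ∈ Finset.range l₀, (badset l).card : ℕ) : ℝ) := by
            exact_mod_cast Finset.card_biUnion_le
        _ = ∑ l ∈ Finset.range l₀, ((badset l).card : ℝ) := by push_cast; rfl
        _ ≤ ∑ _l ∈ Finset.range l₀, (8:ℝ) * d :=
            Finset.sum_le_sum (fun l hl => hbadcard l (Finset.mem_range.mp hl))
        _ = 8 * l₀ * d := by
            rw [Finset.sum_const, Finset.card_range, nsmul_eq_mul]; ring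
    by_cases hl₀0 : l₀ = 0
    · rw [hl₀0] at hcard2
      have h0 : (𝒦.card : ℝ) ≤ 0 := by simpa using hcard2
      have hy2 : (0:ℝ) ≤ 13 * (Real.logb 2 (4 * η * K * H))^2 * d := by positivity
      linarith
    · have hl₀1 : 1 ≤ l₀ := by omega
      set y := Real.logb 2 (4 * η * K * H) with hy
      have hysplit : y = Real.logb 2 (4 * η) + Real.logb 2 ((K * H : ℕ) : ℝ) := by
        rw [hy, show (4 * η * K * H : ℝ) = (4 * η) * ((K * H : ℕ) : ℝ) by push_cast; ring]
        exact Real.logb_mul (by positivity) (by positivity)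
      have h4η : (2:ℝ) ≤ Real.logb 2 (4 * η) := by
        have hmono := Real.logb_le_logb_of_le (by norm_num : (1:ℝ) < 2)
          (by norm_num : (0:ℝ) < 4) (by nlinarith : (4:ℝ) ≤ 4 * η)
        have h4 : Real.logb 2 (4:ℝ) = 2 := by
          rw [show (4:ℝ) = 2^(2:ℕ) by norm_num, hlogpow 2]
          norm_num
        linarith
      have hyKH : Real.logb 2 ((K * H : ℕ) : ℝ) ≤ y - 2 := by linarith [hysplit, h4η]
      have hl₀y : (l₀ : ℝ) ≤ y - 1 := by
        have := hlogKHle hl₀1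
        linarith
      have hy3 : (3:ℝ) ≤ y := by
        have := hlogKH1 hl₀1
        linarith [hysplit, h4η]
      have hyy : 3 * y ≤ y * y := mul_le_mul_of_nonneg_right hy3 (by linarith)
      have hy2eq : y^2 = y * y := pow_two y
      have hquad : 8 * (y - 1) ≤ 13 * y^2 := by rw [hy2eq]; linarith
      have hstep1 : (8:ℝ) * l₀ ≤ 8 * (y - 1) := by linarith
      have hstep1d := mul_le_mul_of_nonneg_right hstep1 hd0
      have hstep2d := mul_le_mul_of_nonneg_right hquad hd0
      calc (𝒦.card : ℝ) ≤ 8 * l₀ * d := hcard2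
        _ ≤ 8 * (y - 1) * d := by linarith
        _ ≤ 13 * y^2 * d := by linarith
  · -- sum bound
    set A := (Finset.range (K * H)).filter (fun n => kdxF K H hK0 n ∉ 𝒦) with hAdef
    have hval0 : ∀ n, 0 ≤ val n := fun n => hgn _ _
    have hdecomp : ∑ k ∈ 𝒦ᶜ, ∑ h, g k (x k h) = ∑ n ∈ A, val n := by
      have hdec := sum_decode K H hK0 hH0 (fun i h => if i ∉ 𝒦 then g i (x i h) else 0)
      have hlhs : ∑ n ∈ Finset.range (K * H), (if kdxF K H hK0 n ∉ 𝒦 then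
          g (kdxF K H hK0 n) (x (kdxF K H hK0 n) (hdxF H hH0 n)) else 0) = ∑ n ∈ A, val n := by
        rw [hAdef, Finset.sum_filter]
      have hrhs : (∑ k, ∑ h, if k ∉ 𝒦 then g k (x k h) else 0)
          = ∑ k ∈ 𝒦ᶜ, ∑ h, g k (x k h) := by
        have h1 : ∀ k : Fin K, (∑ h, if k ∉ 𝒦 then g k (x k h) else 0)
            = if k ∉ 𝒦 then (∑ h, g k (x k h)) else 0 := by
          intro k
          by_cases hk : k ∈ 𝒦 <;> simp [hk]
        rw [Finset.sum_congr rfl (fun k _ => h1 k), ← Finset.sum_filter]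
        apply Finset.sum_congr _ (fun _ _ => rfl)
        ext k
        simp
      rw [← hlhs, hdec, hrhs]
    rw [hdecomp]
    have hsplit := Finset.sum_filter_add_sum_filter_not A (fun n => val n ≤ ((2:ℝ)^l₀)⁻¹) val
    have hsmall : ∑ n ∈ A.filter (fun n => val n ≤ ((2:ℝ)^l₀)⁻¹), val n ≤ 1 := by
      have hcardA : (A.filter (fun n => val n ≤ ((2:ℝ)^l₀)⁻¹)).card ≤ K * H := by
        calc (A.filter (fun n => val n ≤ ((2:ℝ)^l₀)⁻¹)).card
            ≤ A.card := Finset.card_filter_le _ _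
          _ ≤ (Finset.range (K * H)).card := Finset.card_le_card (Finset.filter_subset _ _)
          _ = K * H := Finset.card_range _
      have hKHpow : ((K * H : ℕ) : ℝ) ≤ (2:ℝ)^l₀ := by
        have h := Nat.le_pow_clog (by norm_num : 1 < 2) (K * H)
        calc ((K * H : ℕ) : ℝ) ≤ ((2^l₀ : ℕ) : ℝ) := by exact_mod_cast h
          _ = (2:ℝ)^l₀ := by push_cast; ring
      calc ∑ n ∈ A.filter (fun n => val n ≤ ((2:ℝ)^l₀)⁻¹), val n
          ≤ (A.filter (fun n => val n ≤ ((2:ℝ)^l₀)⁻¹)).card • ((2:ℝ)^l₀)⁻¹ :=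
            Finset.sum_le_card_nsmul _ _ _ (fun n hn => (Finset.mem_filter.mp hn).2)
        _ = ((A.filter (fun n => val n ≤ ((2:ℝ)^l₀)⁻¹)).card : ℝ) * ((2:ℝ)^l₀)⁻¹ :=
            nsmul_eq_mul _ _
        _ ≤ ((K * H : ℕ) : ℝ) * ((2:ℝ)^l₀)⁻¹ := by
            apply mul_le_mul_of_nonneg_right _ (by positivity)
            exact_mod_cast hcardA
        _ ≤ (2:ℝ)^l₀ * ((2:ℝ)^l₀)⁻¹ := mul_le_mul_of_nonneg_right hKHpow (by positivity)
        _ = 1 := mul_inv_cancel₀ (by positivity)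
    have hbig : ∑ n ∈ A.filter (fun n => ¬ val n ≤ ((2:ℝ)^l₀)⁻¹), val n
        ≤ 3 * η * l₀ * d + 2 * d := by
      set Bl : ℕ → Finset ℕ := fun l => A.filter
          (fun n => ((2:ℝ)^(l+1))⁻¹ < val n ∧ val n ≤ ((2:ℝ)^l)⁻¹) with hBldef
      have hcover : A.filter (fun n => ¬ val n ≤ ((2:ℝ)^l₀)⁻¹)
          ⊆ (Finset.range l₀).biUnion Bl := by
        intro n hn
        obtain ⟨hnA, hnbig⟩ := Finset.mem_filter.mp hn
        rw [not_le] at hnbig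
        have hP0 : val n ≤ ((2:ℝ)^(0:ℕ))⁻¹ := by rw [pow_zero, inv_one]; exact hg1 _ _
        have hnotl₀ : ¬ val n ≤ ((2:ℝ)^l₀)⁻¹ := not_le.mpr hnbig
        set fG := Nat.findGreatest (fun l => val n ≤ ((2:ℝ)^l)⁻¹) l₀ with hfGdef
        have hfG : val n ≤ ((2:ℝ)^fG)⁻¹ :=
          Nat.findGreatest_spec (P := fun l => val n ≤ ((2:ℝ)^l)⁻¹) (Nat.zero_le l₀) hP0
        have hfGle : fG ≤ l₀ := Nat.findGreatest_le l₀
        have hfGlt : fG < l₀ := by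
          rcases lt_or_eq_of_le hfGle with h | h
          · exact h
          · exact absurd (h ▸ hfG) hnotl₀
        have hnot1 : ¬ val n ≤ ((2:ℝ)^(fG+1))⁻¹ :=
          Nat.findGreatest_is_greatest (P := fun l => val n ≤ ((2:ℝ)^l)⁻¹)
            (Nat.lt_succ_self _) (by omega)
        exact Finset.mem_biUnion.mpr ⟨fG, Finset.mem_range.mpr hfGlt,
          Finset.mem_filter.mpr ⟨hnA, not_le.mp hnot1, hfG⟩⟩
      have hdisjBl : Set.PairwiseDisjoint ↑(Finset.range l₀) Bl := by
        intro l1 _ l2 _ hne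
        rw [Function.onFun, Finset.disjoint_left]
        intro n h1 h2
        obtain ⟨_, h1a, h1b⟩ := Finset.mem_filter.mp h1
        obtain ⟨_, h2a, h2b⟩ := Finset.mem_filter.mp h2
        rcases Nat.lt_or_ge l1 l2 with h | h
        · have hle : ((2:ℝ)^l2)⁻¹ ≤ ((2:ℝ)^(l1+1))⁻¹ := by
            apply inv_anti₀ (by positivity)
            exact pow_le_pow_right₀ (by norm_num) (by omega)
          linarith
        · have hl2l1 : l2 < l1 := by omega
          have hle : ((2:ℝ)^l1)⁻¹ ≤ ((2:ℝ)^(l2+1))⁻¹ := by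
            apply inv_anti₀ (by positivity)
            exact pow_le_pow_right₀ (by norm_num) (by omega)
          linarith
      have hperscale : ∀ l, l < l₀ → ∑ n ∈ Bl l, val n ≤ 3 * η * d + ((2:ℝ)^l)⁻¹ * d := by
        intro l hll
        have hsub : Bl l ⊆ Pgood l := by
          intro n hn
          obtain ⟨hnA, hnb⟩ := Finset.mem_filter.mp hn
          obtain ⟨hnr, hn𝒦⟩ := Finset.mem_filter.mp hnA
          refine Finset.mem_filter.mpr ⟨hnr, hnb, ?_⟩
          intro hbad
          exact hn𝒦 (Finset.mem_biUnion.mpr ⟨l, Finset.mem_range.mpr hll, hbad⟩)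
        calc ∑ n ∈ Bl l, val n ≤ ∑ n ∈ Pgood l, val n :=
              Finset.sum_le_sum_of_subset_of_nonneg hsub (fun n _ _ => hval0 n)
          _ ≤ (Pgood l).card • ((2:ℝ)^l)⁻¹ := Finset.sum_le_card_nsmul _ _ _
              (fun n hn => ((Finset.mem_filter.mp hn).2.1).2)
          _ = ((Pgood l).card : ℝ) * ((2:ℝ)^l)⁻¹ := nsmul_eq_mul _ _
          _ ≤ ((3 * η * 2^l + 1) * d) * ((2:ℝ)^l)⁻¹ :=
              mul_le_mul_of_nonneg_right (hgood l hll) (by positivity)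
          _ = 3 * η * d + ((2:ℝ)^l)⁻¹ * d := by
              have h2l : ((2:ℝ)^l) ≠ 0 := by positivity
              field_simp
      have hgeom : ∑ l ∈ Finset.range l₀, ((2:ℝ)^l)⁻¹ ≤ 2 := by
        have h1 : ∀ l : ℕ, ((2:ℝ)^l)⁻¹ = (1/2:ℝ)^l := by
          intro l; rw [one_div, inv_pow]
        rw [Finset.sum_congr rfl (fun l _ => h1 l)]
        rw [geom_sum_eq (by norm_num : (1/2:ℝ) ≠ 1) l₀]
        have hp : (0:ℝ) ≤ (1/2:ℝ)^l₀ := by positivity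
        have heq : ((1/2:ℝ)^l₀ - 1) / ((1/2:ℝ) - 1) = 2 - 2 * (1/2:ℝ)^l₀ := by
          ring
        rw [heq]
        linarith
      calc ∑ n ∈ A.filter (fun n => ¬ val n ≤ ((2:ℝ)^l₀)⁻¹), val n
          ≤ ∑ n ∈ (Finset.range l₀).biUnion Bl, val n :=
            Finset.sum_le_sum_of_subset_of_nonneg hcover (fun n _ _ => hval0 n)
        _ = ∑ l ∈ Finset.range l₀, ∑ n ∈ Bl l, val n := Finset.sum_biUnion hdisjBl
        _ ≤ ∑ l ∈ Finset.range l₀, (3 * η * d + ((2:ℝ)^l)⁻¹ * d) :=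
            Finset.sum_le_sum (fun l hl => hperscale l (Finset.mem_range.mp hl))
        _ = 3 * η * l₀ * d + (∑ l ∈ Finset.range l₀, ((2:ℝ)^l)⁻¹) * d := by
            rw [Finset.sum_add_distrib, Finset.sum_const, Finset.card_range,
              nsmul_eq_mul, ← Finset.sum_mul]
            ring
        _ ≤ 3 * η * l₀ * d + 2 * d := by
            have := mul_le_mul_of_nonneg_right hgeom hd0
            linarith
    have hfinal : ∑ n ∈ A, val n ≤ 3 * η * l₀ * d + 2 * d + 1 := by
      rw [← hsplit]
      linarith
    have h3l₀ : 3 * (l₀:ℝ) ≤ 7 * Real.logb 2 ((K * H : ℕ) : ℝ) := by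
      by_cases h0 : l₀ = 0
      · rw [h0]
        have hlg : (0:ℝ) ≤ Real.logb 2 ((K * H : ℕ) : ℝ) := Real.logb_nonneg (by norm_num) hKHr
        push_cast at hlg ⊢
        linarith
      · have hl₀1 : 1 ≤ l₀ := by omega
        have h1 := hlogKHle hl₀1
        have h2 := hlogKH1 hl₀1
        linarith
    have hηd : (0:ℝ) ≤ η * d := mul_nonneg (le_of_lt hη0) hd0
    have hmul := mul_le_mul_of_nonneg_right h3l₀ hηd
    rw [hcastKH] at hmul
    calc ∑ n ∈ A, val n ≤ 3 * η * l₀ * d + 2 * d + 1 := hfinal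
      _ ≤ d * (2 + 7 * η * Real.logb 2 ((K:ℝ) * (H:ℝ))) + 1 := by linarith
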